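/- Let C, D ∈ ℝ² and let K be the additive subgroup of ℝ² generated by {C, D}. If the quotient topological additive group ℝ² ⧸ K is compact, then C and D are linearly independent over ℝ. -/

import Mathlib

/-- If the quotient of `ℝ²` by the additive subgroup generated by `C` and `D`
is compact, then `C` and `D` are linearly independent over `ℝ`. -/
theorem stmt2 (C D : ℝ × ℝ) (K : AddSubgroup (ℝ × ℝ))
    (hK : K = AddSubgroup.closure ({C, D} : Set (ℝ × ℝ)))
    (hcompact : CompactSpace ((ℝ × ℝ) ⧸ K)) :
    LinearIndependent ℝ ![C, D] := by
  by_contra hli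
  -- The span of {C, D} is a proper submodule
  have hspan : Submodule.span ℝ ({C, D} : Set (ℝ × ℝ)) < ⊤ := by
    rcases lt_or_eq_of_le (le_top (a := Submodule.span ℝ ({C, D} : Set (ℝ × ℝ)))) with h | h
    · exact h
    · exfalso
      apply hli
      apply linearIndependent_of_top_le_span_of_card_eq_finrank
      · have : Set.range ![C, D] = {C, D} := by
          simp [Matrix.range_cons, Matrix.range_empty, Set.insert_union, Set.pair_comm]
        rw [this, h]
      · simp
  -- find a nonzero linear functional vanishing on the span
  obtain ⟨f, hf0, hfmap⟩ :=
    Submodule.exists_dual_map_eq_bot_of_lt_top hspan inferInstance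
  have hfC : f C = 0 := by
    have : f C ∈ Submodule.map f (Submodule.span ℝ ({C, D} : Set (ℝ × ℝ))) :=
      ⟨C, Submodule.subset_span (by simp), rfl⟩
    rw [hfmap] at this; simpa using this
  have hfD : f D = 0 := by
    have : f D ∈ Submodule.map f (Submodule.span ℝ ({C, D} : Set (ℝ × ℝ))) :=
      ⟨D, Submodule.subset_span (by simp), rfl⟩
    rw [hfmap] at this; simpa using this
  -- f vanishes on K
  have hKle : K ≤ f.toAddMonoidHom.ker := by
    rw [hK]
    apply AddSubgroup.closure_le _ |>.mpr
    intro x hx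
    simp only [Set.mem_insert_iff, Set.mem_singleton_iff] at hx
    rcases hx with rfl | rfl <;> simp [hfC, hfD]
  -- lift f to the quotient
  let g : (ℝ × ℝ) ⧸ K →+ ℝ := QuotientAddGroup.lift K f.toAddMonoidHom hKle
  have hfc : Continuous f := f.continuous_of_finiteDimensional
  have hgc : Continuous g := by
    apply continuous_quot_lift
    exact hfc
  -- f is surjective since nonzero
  have hfsurj : Function.Surjective f := by
    obtain ⟨x, hx⟩ : ∃ x, f x ≠ 0 := by
      by_contra h
      push_neg at h
      exact hf0 (LinearMap.ext fun x => by simp [h x])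
    intro r
    exact ⟨(r / f x) • x, by rw [map_smul, smul_eq_mul, div_mul_cancel₀ r hx]⟩
  have hgsurj : Function.Surjective g := fun r => by
    obtain ⟨x, hx⟩ := hfsurj r
    exact ⟨QuotientAddGroup.mk x, hx⟩
  -- contradiction: ℝ would be compact
  have : IsCompact (Set.univ : Set ℝ) := by
    rw [← Set.range_eq_univ.mpr hgsurj]
    exact isCompact_range hgc
  exact noncompact_univ ℝ this
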